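/- There exists a universal constant C₁ > 0 with the following property. Let C, A > 0, m, m' ∈ ℤ, and let f(t) = t^m·Σ_{j≥0} f_j t^j and g(t) = t^{m'}·Σ_{j≥0} g_j t^j be formal Laurent series over ℂ with f₀ ≠ 0, |f_j| ≤ e^{C(j+1)} for all j ≥ 0, |g₀| ≥ e^{−A}, and |g_j| ≤ e^{C(j+1)} for all j ≥ 0. Then the quotient has the expansion f(t)/g(t) = t^{m−m'}·Σ_{j≥0} h_j t^j with |h_j| ≤ e^{(3C+C₁+A)(j+1)} for all j ≥ 0. -/

import Mathlib

private lemma geom_aux {r : ℝ} (h0 : 0 ≤ r) (h1 : r < 1) (n : ℕ) :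
    ∑ i ∈ Finset.range n, r ^ i ≤ (1 - r)⁻¹ := by
  have h := Summable.sum_le_tsum (Finset.range n) (fun i _ => pow_nonneg h0 i)
    (summable_geometric_of_lt_one h0 h1)
  rwa [tsum_geometric_of_lt_one h0 h1] at h

noncomputable def laurentOf (m : ℤ) (c : ℕ → ℂ) : LaurentSeries ℂ :=
  HahnSeries.single m (1 : ℂ) * HahnSeries.ofPowerSeries ℤ ℂ (PowerSeries.mk c)

theorem laurent_div_coeff_bound :
    ∃ C₁ : ℝ, 0 < C₁ ∧
      ∀ C A : ℝ, 0 < C → 0 < A → ∀ m m' : ℤ, ∀ fc gc : ℕ → ℂ,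
        fc 0 ≠ 0 →
        (∀ j : ℕ, ‖fc j‖ ≤ Real.exp (C * (j + 1))) →
        Real.exp (-A) ≤ ‖gc 0‖ →
        (∀ j : ℕ, ‖gc j‖ ≤ Real.exp (C * (j + 1))) →
        ∃ hc : ℕ → ℂ,
          laurentOf m fc / laurentOf m' gc = laurentOf (m - m') hc ∧
          ∀ j : ℕ, ‖hc j‖ ≤ Real.exp ((3 * C + C₁ + A) * (j + 1)) := by
  refine ⟨2, two_pos, ?_⟩
  intro C A hC hA m m' fc gc hf0 hfb hg0 hgb
  have hg0' : gc 0 ≠ 0 := by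
    intro h
    rw [h, norm_zero] at hg0
    exact absurd hg0 (not_le.2 (Real.exp_pos _))
  set F : PowerSeries ℂ := PowerSeries.mk fc with hF
  set G : PowerSeries ℂ := PowerSeries.mk gc with hG
  have hGc : PowerSeries.constantCoeff G ≠ 0 := by
    simpa [hG, PowerSeries.coeff_zero_eq_constantCoeff.symm] using hg0'
  set h : ℕ → ℂ := fun j => PowerSeries.coeff j (F * G⁻¹) with hh
  refine ⟨h, ?_, ?_⟩
  · -- structural equality
    have hmk : PowerSeries.mk h = F * G⁻¹ := by
      ext n; simp [hh, PowerSeries.coeff_mk]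
    have hbinv : (laurentOf m' gc)⁻¹ =
        HahnSeries.single (-m') (1 : ℂ) * HahnSeries.ofPowerSeries ℤ ℂ G⁻¹ := by
      apply inv_eq_of_mul_eq_one_right
      unfold laurentOf
      rw [mul_mul_mul_comm, HahnSeries.single_mul_single, ← map_mul,
        PowerSeries.mul_inv_cancel G hGc, add_neg_cancel, one_mul,
        RingHom.map_one (HahnSeries.ofPowerSeries ℤ ℂ), mul_one, HahnSeries.single_zero_one]
    rw [div_eq_mul_inv, hbinv, laurentOf, laurentOf, hmk, mul_mul_mul_comm,
      HahnSeries.single_mul_single, ← map_mul, one_mul, sub_eq_add_neg]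
  · -- coefficient bound
    have hGH : G * (F * G⁻¹) = F := by
      rw [mul_left_comm, PowerSeries.mul_inv_cancel G hGc, mul_one]
    have key : ∀ j : ℕ, gc 0 * h j =
        fc j - ∑ i ∈ Finset.range j, gc (i + 1) * h (j - (i + 1)) := by
      intro j
      have hco := congrArg (PowerSeries.coeff j) hGH
      rw [PowerSeries.coeff_mul, Finset.Nat.sum_antidiagonal_eq_sum_range_succ_mk,
        Finset.sum_range_succ'] at hco
      simp only [hF, hG, hh, PowerSeries.coeff_mk, Nat.sub_zero] at hco ⊢
      linear_combination hco
    set D : ℝ := 3 * C + 2 + A with hD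
    set r : ℝ := Real.exp (-(2 + A)) with hr
    have hr0 : 0 < r := Real.exp_pos _
    have he2 : Real.exp (-2 : ℝ) ≤ 1 / 3 := by
      have h3 : (3 : ℝ) ≤ Real.exp 2 := by
        have := Real.add_one_le_exp (2 : ℝ); linarith
      rw [Real.exp_neg]
      exact inv_le_of_inv_le₀ (by norm_num) (by simpa [one_div] using h3)
    have hrle : r ≤ 1 / 3 := by
      refine le_trans ?_ he2
      exact Real.exp_le_exp.2 (by linarith)
    have hr1 : r < 1 := lt_of_le_of_lt hrle (by norm_num)
    intro j
    induction j using Nat.strong_induction_on with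
    | _ j ih =>
    have hAr : Real.exp (-A) * ‖h j‖ ≤ ‖gc 0 * h j‖ := by
      rw [norm_mul]
      exact mul_le_mul_of_nonneg_right hg0 (norm_nonneg _)
    have hsum : ‖gc 0 * h j‖ ≤
        ‖fc j‖ + ∑ i ∈ Finset.range j, ‖gc (i + 1)‖ * ‖h (j - (i + 1))‖ := by
      rw [key j]
      refine (norm_sub_le _ _).trans ?_
      gcongr
      exact (norm_sum_le _ _).trans (le_of_eq (by simp [norm_mul]))
    have hterm : ∀ i ∈ Finset.range j, ‖gc (i + 1)‖ * ‖h (j - (i + 1))‖ ≤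
        Real.exp (D * (j + 1)) * r ^ (i + 1) := by
      intro i hi
      have hij : i + 1 ≤ j := Finset.mem_range.1 hi
      have hlt : j - (i + 1) < j := Nat.sub_lt (Nat.lt_of_lt_of_le (Nat.succ_pos i) hij)
        (Nat.succ_pos i)
      have h1 := hgb (i + 1)
      have h2 := ih _ hlt
      calc ‖gc (i + 1)‖ * ‖h (j - (i + 1))‖
          ≤ Real.exp (C * ((i + 1 : ℕ) + 1)) *
            Real.exp ((3 * C + 2 + A) * ((j - (i + 1) : ℕ) + 1)) :=
            mul_le_mul h1 h2 (norm_nonneg _) (Real.exp_pos _).le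
        _ ≤ Real.exp (D * (j + 1)) * r ^ (i + 1) := by
            rw [hr, ← Real.exp_nat_mul, ← Real.exp_add, ← Real.exp_add]
            apply Real.exp_le_exp.2
            have hcast : ((j - (i + 1) : ℕ) : ℝ) = (j : ℝ) - (i + 1) := by
              push_cast [Nat.cast_sub hij]; ring
            rw [hcast, hD]
            push_cast
            nlinarith [hC.le, hA.le, (Nat.cast_nonneg i : (0:ℝ) ≤ i)]
    have hf' : ‖fc j‖ ≤ Real.exp (D * (j + 1)) * r ^ (j + 1) := by
      refine (hfb j).trans ?_
      rw [hr, ← Real.exp_nat_mul, ← Real.exp_add]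
      apply Real.exp_le_exp.2
      rw [hD]; push_cast
      nlinarith [hC.le, hA.le, (Nat.cast_nonneg j : (0:ℝ) ≤ j)]
    have htot : Real.exp (-A) * ‖h j‖ ≤ Real.exp (D * (j + 1)) * (r * (1 - r)⁻¹) := by
      calc Real.exp (-A) * ‖h j‖ ≤ ‖gc 0 * h j‖ := hAr
        _ ≤ ‖fc j‖ + ∑ i ∈ Finset.range j, ‖gc (i + 1)‖ * ‖h (j - (i + 1))‖ := hsum
        _ ≤ Real.exp (D * (j + 1)) * r ^ (j + 1) +
            ∑ i ∈ Finset.range j, Real.exp (D * (j + 1)) * r ^ (i + 1) :=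
            add_le_add hf' (Finset.sum_le_sum hterm)
        _ = Real.exp (D * (j + 1)) * ∑ i ∈ Finset.range (j + 1), r ^ (i + 1) := by
            rw [Finset.sum_range_succ, mul_add (Real.exp (D * ((j : ℝ) + 1))),
              Finset.mul_sum]
            exact add_comm _ _
        _ ≤ Real.exp (D * (j + 1)) * (r * (1 - r)⁻¹) := by
            apply mul_le_mul_of_nonneg_left _ (Real.exp_pos _).le
            have : ∑ i ∈ Finset.range (j + 1), r ^ (i + 1)
                = r * ∑ i ∈ Finset.range (j + 1), r ^ i := by
              rw [Finset.mul_sum]; exact Finset.sum_congr rfl fun i _ => by ring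
            rw [this]
            exact mul_le_mul_of_nonneg_left (geom_aux hr0.le hr1 _) hr0.le
    have hfac : Real.exp A * (r * (1 - r)⁻¹) ≤ 1 := by
      have h1 : Real.exp A * r = Real.exp (-2 : ℝ) := by
        rw [hr, ← Real.exp_add]; ring_nf
      have h2 : (1 - r)⁻¹ ≤ (3 : ℝ) / 2 := by
        rw [show (3:ℝ)/2 = (2/3:ℝ)⁻¹ by norm_num]
        apply inv_anti₀ (by norm_num)
        linarith
      calc Real.exp A * (r * (1 - r)⁻¹) = Real.exp A * r * (1 - r)⁻¹ := by ring
        _ ≤ (1/3 : ℝ) * (3/2 : ℝ) := by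
            exact mul_le_mul (h1 ▸ he2) h2 (inv_nonneg.2 (by linarith)) (by norm_num)
        _ ≤ 1 := by norm_num
    have hfinal : ‖h j‖ ≤ Real.exp (D * (j + 1)) := by
      have := mul_le_mul_of_nonneg_left htot (Real.exp_pos A).le
      rw [← mul_assoc, ← Real.exp_add, add_neg_cancel, Real.exp_zero, one_mul] at this
      calc ‖h j‖ ≤ Real.exp A * (Real.exp (D * (j + 1)) * (r * (1 - r)⁻¹)) := this
        _ = Real.exp (D * (j + 1)) * (Real.exp A * (r * (1 - r)⁻¹)) := by ring
        _ ≤ Real.exp (D * (j + 1)) * 1 :=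
            mul_le_mul_of_nonneg_left hfac (Real.exp_pos _).le
        _ = Real.exp (D * (j + 1)) := mul_one _
    simpa [hD] using hfinal
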